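/- Let λ = (λ^B, λ^S) be nonnegative dual variables. Then sup over implementable allocations x and balanced payments p of L(λ, x, p) is finite if and only if there exists a real number α ≥ 0 such that for every buyer i and every b_i ∈ T^B_i, (1/f_i(b_i))·(Σ_{b'_i ∈ T^B_i ∪ {∅}} λ^B_i(b_i, b'_i) − Σ_{b'_i ∈ T^B_i} λ^B_i(b'_i, b_i)) = α, and for every seller j and every s_j ∈ T^S_j, (1/g_j(s_j))·(Σ_{s'_j ∈ T^S_j ∪ {∅}} λ^S_j(s_j, s'_j) − Σ_{s'_j ∈ T^S_j} λ^S_j(s'_j, s_j)) = α. -/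

import Mathlib

open Finset

namespace Stmt4

variable {n m : ℕ} {K : Fin n → ℕ} {K' : Fin m → ℕ}

/-- A buyer type profile: each buyer `i` has one of `K i` possible types. -/
abbrev ProfileB (K : Fin n → ℕ) := ∀ i, Fin (K i)

/-- A seller type profile. -/
abbrev ProfileS (K' : Fin m → ℕ) := ∀ j, Fin (K' j)

/-- Expectation of `h` over the independent product of the buyers' distributions `f`
and the sellers' distributions `g`. -/
def Ex (f : ∀ i, Fin (K i) → ℝ) (g : ∀ j, Fin (K' j) → ℝ)
    (h : ProfileB K → ProfileS K' → ℝ) : ℝ :=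
  ∑ b : ProfileB K, ∑ s : ProfileS K',
    ((∏ i, f i (b i)) * ∏ j, g j (s j)) * h b s

/-- `x` is implementable w.r.t. the feasibility constraint `F`: at every type profile the
vector `(x_{ij}(b,s))_{ij}` is a convex combination of indicator vectors of matchings in `F`. -/
def Implementable (F : Set (Finset (Fin n × Fin m)))
    (x : ProfileB K → ProfileS K' → Fin n × Fin m → ℝ) : Prop :=
  ∀ b s, ∃ γ : Finset (Fin n × Fin m) → ℝ,
    (∀ M, 0 ≤ γ M) ∧ (∀ M, γ M ≠ 0 → M ∈ F) ∧ (∑ M, γ M = 1) ∧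
    (∀ e, x b s e = ∑ M, γ M * (if e ∈ M then 1 else 0))

/-- `U^B_i(t, r)`: interim utility of buyer `i` of true type `t` reporting `r`, where
`r = none` is the non-participation report `∅` (allocation and payment are `0` there). -/
def utilB (vB : ∀ i, Fin (K i) → ℝ)
    (f : ∀ i, Fin (K i) → ℝ) (g : ∀ j, Fin (K' j) → ℝ)
    (x : ProfileB K → ProfileS K' → Fin n × Fin m → ℝ)
    (pB : Fin n → ProfileB K → ProfileS K' → ℝ)
    (i : Fin n) (t : Fin (K i)) (r : Option (Fin (K i))) : ℝ :=
  Ex f g (fun b s => Option.elim r 0 (fun r' =>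
    vB i t * (∑ j, x (Function.update b i r') s (i, j))
      - pB i (Function.update b i r') s))

/-- `U^S_j(t, r)`: interim utility of seller `j` of true type `t` reporting `r`. -/
def utilS (vS : ∀ j, Fin (K' j) → ℝ)
    (f : ∀ i, Fin (K i) → ℝ) (g : ∀ j, Fin (K' j) → ℝ)
    (x : ProfileB K → ProfileS K' → Fin n × Fin m → ℝ)
    (pS : Fin m → ProfileB K → ProfileS K' → ℝ)
    (j : Fin m) (t : Fin (K' j)) (r : Option (Fin (K' j))) : ℝ :=
  Ex f g (fun b s => Option.elim r 0 (fun r' =>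
    pS j b (Function.update s j r')
      - vS j t * (∑ i, x b (Function.update s j r') (i, j))))

/-- The partial Lagrangian `L(λ, x, p)`. -/
def Lagr (vB : ∀ i, Fin (K i) → ℝ) (vS : ∀ j, Fin (K' j) → ℝ)
    (f : ∀ i, Fin (K i) → ℝ) (g : ∀ j, Fin (K' j) → ℝ)
    (lamB : ∀ i, Fin (K i) → Option (Fin (K i)) → ℝ)
    (lamS : ∀ j, Fin (K' j) → Option (Fin (K' j)) → ℝ)
    (x : ProfileB K → ProfileS K' → Fin n × Fin m → ℝ)
    (pB : Fin n → ProfileB K → ProfileS K' → ℝ)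
    (pS : Fin m → ProfileB K → ProfileS K' → ℝ) : ℝ :=
  Ex f g (fun b s => ∑ i, ∑ j, x b s (i, j) * (vB i (b i) - vS j (s j)))
    + (∑ i, ∑ t : Fin (K i), ∑ r : Option (Fin (K i)), lamB i t r *
        (utilB vB f g x pB i t (some t) - utilB vB f g x pB i t r))
    + (∑ j, ∑ t : Fin (K' j), ∑ r : Option (Fin (K' j)), lamS j t r *
        (utilS vS f g x pS j t (some t) - utilS vS f g x pS j t r))


section MyAux


lemma sum_update {ι : Type*} [Fintype ι] [DecidableEq ι] {κ : ι → Type*}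
    [∀ i, Fintype (κ i)] [∀ i, DecidableEq (κ i)]
    (i : ι) (r' : κ i) (F : κ i → ℝ) (G : (∀ i, κ i) → ℝ) :
    ∑ b : ∀ i, κ i, F (b i) * G (Function.update b i r')
      = (∑ u, F u) * ∑ b : ∀ i, κ i, (if b i = r' then 1 else 0) * G b := by
  have key : ∑ p : (∀ i, κ i) × κ i, (if p.2 = r' then 1 else 0) * F (p.1 i) * G (Function.update p.1 i p.2)
      = ∑ p : (∀ i, κ i) × κ i, (if p.1 i = r' then 1 else 0) * F p.2 * G p.1 := by
    apply Fintype.sum_bijective (fun p : (∀ i, κ i) × κ i => (Function.update p.1 i p.2, p.1 i))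
    · constructor
      · rintro ⟨b, u⟩ ⟨b', u'⟩ h
        simp only [Prod.mk.injEq] at h
        obtain ⟨h1, h2⟩ := h
        have hb : b = b' := by
          funext j
          by_cases hj : j = i
          · subst hj; exact h2
          · have := congrFun h1 j
            simpa [Function.update_of_ne hj] using this
        subst hb
        have := congrFun h1 i
        simp [Function.update_self] at this
        simp [this]
      · rintro ⟨b, u⟩
        exact ⟨(Function.update b i u, b i), by
          simp [Function.update_idem, Function.update_eq_self, Function.update_self]⟩
    · rintro ⟨b, u⟩
      simp [Function.update_self, Function.update_idem, Function.update_eq_self]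
  calc ∑ b : ∀ i, κ i, F (b i) * G (Function.update b i r')
      = ∑ p : (∀ i, κ i) × κ i, (if p.2 = r' then 1 else 0) * F (p.1 i) * G (Function.update p.1 i p.2) := by
        rw [Fintype.sum_prod_type]
        refine Finset.sum_congr rfl fun b _ => ?_
        rw [Finset.sum_eq_single r']
        · simp
        · intro u _ hu; simp [hu]
        · simp
    _ = ∑ p : (∀ i, κ i) × κ i, (if p.1 i = r' then 1 else 0) * F p.2 * G p.1 := key
    _ = (∑ u, F u) * ∑ b : ∀ i, κ i, (if b i = r' then 1 else 0) * G b := by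
        rw [Fintype.sum_prod_type, Finset.mul_sum]
        refine Finset.sum_congr rfl fun b _ => ?_
        have h : ∀ y, (if b i = r' then (1:ℝ) else 0) * F y * G b
            = F y * ((if b i = r' then 1 else 0) * G b) := fun y => by ring
        simp only [h]
        rw [← Finset.sum_mul]



lemma sum_neg' {ι : Type*} [Fintype ι] (f : ι → ℝ) : ∑ i, -f i = -∑ i, f i := by
  simp

lemma block_general {κ : Type*} [Fintype κ] (lam : κ → Option κ → ℝ) (V : κ → ℝ) :
    ∑ t, ∑ r : Option κ, lam t r * (V t - Option.elim r 0 V)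
      = ∑ u, ((∑ r : Option κ, lam u r) - ∑ t, lam t (some u)) * V u := by
  have L1 : ∀ t, ∑ r : Option κ, lam t r * (V t - Option.elim r 0 V)
      = lam t none * V t + ((∑ u, lam t (some u)) * V t - ∑ u, lam t (some u) * V u) := by
    intro t
    rw [Fintype.sum_option]
    simp only [Option.elim]
    rw [sub_zero, Finset.sum_mul, ← Finset.sum_sub_distrib]
    congr 1
    exact Finset.sum_congr rfl fun u _ => by ring
  simp only [L1]
  rw [Finset.sum_add_distrib, Finset.sum_sub_distrib]
  have R1 : ∀ u, ((∑ r : Option κ, lam u r) - ∑ t, lam t (some u)) * V u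
      = lam u none * V u + ((∑ r', lam u (some r')) * V u - ∑ t, lam t (some u) * V u) := by
    intro u
    rw [Fintype.sum_option,
      show ∑ t, lam t (some u) * V u = (∑ t, lam t (some u)) * V u from (Finset.sum_mul _ _ _).symm]
    ring
  simp only [R1]
  rw [Finset.sum_add_distrib, Finset.sum_sub_distrib]
  congr 1
  rw [Finset.sum_comm]


section ExL
variable {f : ∀ i, Fin (K i) → ℝ} {g : ∀ j, Fin (K' j) → ℝ}


lemma Ex_congr {h h' : ProfileB K → ProfileS K' → ℝ} (H : ∀ b s, h b s = h' b s) :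
    Ex f g h = Ex f g h' :=
  Finset.sum_congr rfl fun b _ => Finset.sum_congr rfl fun s _ => by rw [H]

lemma Ex_add (h h' : ProfileB K → ProfileS K' → ℝ) :
    Ex f g (fun b s => h b s + h' b s) = Ex f g h + Ex f g h' := by
  unfold Ex
  rw [← Finset.sum_add_distrib]
  refine Finset.sum_congr rfl fun b _ => ?_
  rw [← Finset.sum_add_distrib]
  exact Finset.sum_congr rfl fun s _ => by ring

lemma Ex_zero : Ex (K := K) (K' := K') f g (fun _ _ => 0) = 0 := by simp [Ex]

lemma sum_prodf (hf1 : ∀ i, ∑ t, f i t = 1) : ∑ b : ProfileB K, ∏ i, f i (b i) = 1 := by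
  rw [← Fintype.piFinset_univ, ← Finset.prod_univ_sum]
  simp [hf1]

lemma sum_prodg (hg1 : ∀ j, ∑ t, g j t = 1) : ∑ s : ProfileS K', ∏ j, g j (s j) = 1 := by
  rw [← Fintype.piFinset_univ, ← Finset.prod_univ_sum]
  simp [hg1]

lemma weight_nonneg (hf : ∀ i t, 0 < f i t) (hg : ∀ j t, 0 < g j t)
    (b : ProfileB K) (s : ProfileS K') :
    0 ≤ (∏ i, f i (b i)) * ∏ j, g j (s j) :=
  mul_nonneg (Finset.prod_nonneg fun i _ => (hf i (b i)).le)
    (Finset.prod_nonneg fun j _ => (hg j (s j)).le)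

lemma weight_sum (hf1 : ∀ i, ∑ t, f i t = 1) (hg1 : ∀ j, ∑ t, g j t = 1) :
    ∑ b : ProfileB K, ∑ s : ProfileS K', (∏ i, f i (b i)) * ∏ j, g j (s j) = 1 := by
  rw [← Finset.sum_mul_sum, sum_prodf hf1, sum_prodg hg1, one_mul]

lemma Ex_le (hf : ∀ i t, 0 < f i t) (hf1 : ∀ i, ∑ t, f i t = 1)
    (hg : ∀ j t, 0 < g j t) (hg1 : ∀ j, ∑ t, g j t = 1)
    {h : ProfileB K → ProfileS K' → ℝ} {M : ℝ} (H : ∀ b s, h b s ≤ M) :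
    Ex f g h ≤ M := by
  have step : Ex f g h ≤ ∑ b : ProfileB K, ∑ s : ProfileS K',
      ((∏ i, f i (b i)) * ∏ j, g j (s j)) * M := by
    refine Finset.sum_le_sum fun b _ => Finset.sum_le_sum fun s _ => ?_
    exact mul_le_mul_of_nonneg_left (H b s) (weight_nonneg hf hg b s)
  refine step.trans ?_
  have : ∑ b : ProfileB K, ∑ s : ProfileS K',
      ((∏ i, f i (b i)) * ∏ j, g j (s j)) * M
      = (∑ b : ProfileB K, ∑ s : ProfileS K', (∏ i, f i (b i)) * ∏ j, g j (s j)) * M := by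
    rw [Finset.sum_mul]
    exact Finset.sum_congr rfl fun b _ => (Finset.sum_mul _ _ _).symm
  rw [this, weight_sum hf1 hg1, one_mul]

lemma Ex_abs_le (hf : ∀ i t, 0 < f i t) (hf1 : ∀ i, ∑ t, f i t = 1)
    (hg : ∀ j t, 0 < g j t) (hg1 : ∀ j, ∑ t, g j t = 1)
    {h : ProfileB K → ProfileS K' → ℝ} {M : ℝ} (H : ∀ b s, |h b s| ≤ M) :
    |Ex f g h| ≤ M := by
  have h1 : |Ex f g h| ≤ ∑ b : ProfileB K, ∑ s : ProfileS K',
      ((∏ i, f i (b i)) * ∏ j, g j (s j)) * |h b s| := by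
    refine (Finset.abs_sum_le_sum_abs _ _).trans ?_
    refine Finset.sum_le_sum fun b _ => ?_
    refine (Finset.abs_sum_le_sum_abs _ _).trans ?_
    refine Finset.sum_le_sum fun s _ => ?_
    rw [abs_mul, abs_of_nonneg (weight_nonneg hf hg b s)]
  refine h1.trans ?_
  exact Ex_le hf hf1 hg hg1 H

end ExL

section Main2
variable {n m : ℕ} {K : Fin n → ℕ} {K' : Fin m → ℕ}
variable {f : ∀ i, Fin (K i) → ℝ} {g : ∀ j, Fin (K' j) → ℝ}

/-- net outflow of dual mass at buyer type `u`. -/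
def dB (lamB : ∀ i, Fin (K i) → Option (Fin (K i)) → ℝ) (i : Fin n) (u : Fin (K i)) : ℝ :=
  (∑ r : Option (Fin (K i)), lamB i u r) - ∑ t, lamB i t (some u)

def dS (lamS : ∀ j, Fin (K' j) → Option (Fin (K' j)) → ℝ) (j : Fin m) (u : Fin (K' j)) : ℝ :=
  (∑ r : Option (Fin (K' j)), lamS j u r) - ∑ t, lamS j t (some u)

lemma utilB_zero_none (vB : ∀ i, Fin (K i) → ℝ) (pB : Fin n → ProfileB K → ProfileS K' → ℝ)
    (i : Fin n) (t : Fin (K i)) :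
    utilB vB f g (fun _ _ _ => 0) pB i t none = 0 := by
  simp [utilB, Ex]

lemma utilB_zero_some (hf1 : ∀ i, ∑ t, f i t = 1)
    (vB : ∀ i, Fin (K i) → ℝ) (pB : Fin n → ProfileB K → ProfileS K' → ℝ)
    (i : Fin n) (t u : Fin (K i)) :
    utilB vB f g (fun _ _ _ => 0) pB i t (some u)
      = ∑ b : ProfileB K, (if b i = u then 1 else 0) *
          -((∏ i' ∈ univ.erase i, f i' (b i')) *
            ∑ s : ProfileS K', (∏ j, g j (s j)) * pB i b s) := by
  have e1 : utilB vB f g (fun _ _ _ => 0) pB i t (some u)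
      = Ex f g (fun b s => -pB i (Function.update b i u) s) := by
    unfold utilB
    exact Ex_congr fun b s => by simp
  have key : Ex f g (fun b s => -pB i (Function.update b i u) s)
      = ∑ b : ProfileB K, f i (b i) *
          -((∏ i' ∈ univ.erase i, f i' (Function.update b i u i')) *
            ∑ s : ProfileS K', (∏ j, g j (s j)) * pB i (Function.update b i u) s) := by
    unfold Ex
    refine Finset.sum_congr rfl fun b _ => ?_
    have hupd : (∏ i' ∈ univ.erase i, f i' (Function.update b i u i'))
        = ∏ i' ∈ univ.erase i, f i' (b i') :=
      Finset.prod_congr rfl fun i' hi' => by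
        rw [Function.update_of_ne (Finset.mem_erase.mp hi').1]
    have hEf : (∏ i', f i' (b i'))
        = f i (b i) * ∏ i' ∈ univ.erase i, f i' (Function.update b i u i') := by
      rw [hupd]
      exact (Finset.mul_prod_erase univ _ (Finset.mem_univ i)).symm
    calc ∑ s : ProfileS K', ((∏ i', f i' (b i')) * ∏ j, g j (s j)) *
            -pB i (Function.update b i u) s
        = -((∏ i', f i' (b i')) *
            ∑ s : ProfileS K', (∏ j, g j (s j)) * pB i (Function.update b i u) s) := by
          rw [Finset.mul_sum, ← sum_neg']
          exact Finset.sum_congr rfl fun s _ => by ring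
      _ = f i (b i) *
          -((∏ i' ∈ univ.erase i, f i' (Function.update b i u i')) *
            ∑ s : ProfileS K', (∏ j, g j (s j)) * pB i (Function.update b i u) s) := by
          rw [hEf]; ring
  have hsu := sum_update i u (f i) (fun b' =>
    -((∏ i' ∈ univ.erase i, f i' (b' i')) *
      ∑ s : ProfileS K', (∏ j, g j (s j)) * pB i b' s))
  beta_reduce at hsu
  rw [e1, key, hsu, hf1 i, one_mul]

lemma utilS_zero_none (vS : ∀ j, Fin (K' j) → ℝ) (pS : Fin m → ProfileB K → ProfileS K' → ℝ)
    (j : Fin m) (t : Fin (K' j)) :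
    utilS vS f g (fun _ _ _ => 0) pS j t none = 0 := by
  simp [utilS, Ex]

lemma utilS_zero_some (hg1 : ∀ j, ∑ t, g j t = 1)
    (vS : ∀ j, Fin (K' j) → ℝ) (pS : Fin m → ProfileB K → ProfileS K' → ℝ)
    (j : Fin m) (t u : Fin (K' j)) :
    utilS vS f g (fun _ _ _ => 0) pS j t (some u)
      = ∑ s : ProfileS K', (if s j = u then 1 else 0) *
          ((∏ j' ∈ univ.erase j, g j' (s j')) *
            ∑ b : ProfileB K, (∏ i, f i (b i)) * pS j b s) := by
  have e1 : utilS vS f g (fun _ _ _ => 0) pS j t (some u)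
      = Ex f g (fun b s => pS j b (Function.update s j u)) := by
    unfold utilS
    exact Ex_congr fun b s => by simp
  have key : Ex f g (fun b s => pS j b (Function.update s j u))
      = ∑ s : ProfileS K', g j (s j) *
          ((∏ j' ∈ univ.erase j, g j' (Function.update s j u j')) *
            ∑ b : ProfileB K, (∏ i, f i (b i)) * pS j b (Function.update s j u)) := by
    unfold Ex
    rw [Finset.sum_comm]
    refine Finset.sum_congr rfl fun s _ => ?_
    have hupd : (∏ j' ∈ univ.erase j, g j' (Function.update s j u j'))
        = ∏ j' ∈ univ.erase j, g j' (s j') :=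
      Finset.prod_congr rfl fun j' hj' => by
        rw [Function.update_of_ne (Finset.mem_erase.mp hj').1]
    have hEg : (∏ j', g j' (s j'))
        = g j (s j) * ∏ j' ∈ univ.erase j, g j' (Function.update s j u j') := by
      rw [hupd]
      exact (Finset.mul_prod_erase univ _ (Finset.mem_univ j)).symm
    calc ∑ b : ProfileB K, ((∏ i, f i (b i)) * ∏ j', g j' (s j')) *
            pS j b (Function.update s j u)
        = (∏ j', g j' (s j')) *
            ∑ b : ProfileB K, (∏ i, f i (b i)) * pS j b (Function.update s j u) := by
          rw [Finset.mul_sum]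
          exact Finset.sum_congr rfl fun b _ => by ring
      _ = g j (s j) *
          ((∏ j' ∈ univ.erase j, g j' (Function.update s j u j')) *
            ∑ b : ProfileB K, (∏ i, f i (b i)) * pS j b (Function.update s j u)) := by
          rw [hEg]; ring
  have hsu := sum_update j u (g j) (fun s' =>
    (∏ j' ∈ univ.erase j, g j' (s' j')) *
      ∑ b : ProfileB K, (∏ i, f i (b i)) * pS j b s')
  beta_reduce at hsu
  rw [e1, key, hsu, hg1 j, one_mul]

end Main2



section Main3
variable {n m : ℕ} {K : Fin n → ℕ} {K' : Fin m → ℕ}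
variable {f : ∀ i, Fin (K i) → ℝ} {g : ∀ j, Fin (K' j) → ℝ}

lemma buyer_block (hf1 : ∀ i, ∑ t, f i t = 1)
    (vB : ∀ i, Fin (K i) → ℝ) (pB : Fin n → ProfileB K → ProfileS K' → ℝ)
    (lamB : ∀ i, Fin (K i) → Option (Fin (K i)) → ℝ) (i : Fin n) :
    ∑ t, ∑ r : Option (Fin (K i)), lamB i t r *
        (utilB vB f g (fun _ _ _ => 0) pB i t (some t)
          - utilB vB f g (fun _ _ _ => 0) pB i t r)
      = -∑ b : ProfileB K, dB lamB i (b i) *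
          ((∏ i' ∈ univ.erase i, f i' (b i')) *
            ∑ s : ProfileS K', (∏ j, g j (s j)) * pB i b s) := by
  set Q : ProfileB K → ℝ := fun b =>
    (∏ i' ∈ univ.erase i, f i' (b i')) *
      ∑ s : ProfileS K', (∏ j, g j (s j)) * pB i b s with hQ
  set W : Fin (K i) → ℝ := fun u =>
    ∑ b : ProfileB K, (if b i = u then 1 else 0) * -Q b with hW
  have hsome : ∀ (t u : Fin (K i)),
      utilB vB f g (fun _ _ _ => 0) pB i t (some u) = W u := by
    intro t u
    rw [utilB_zero_some hf1 vB pB i t u, hW]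
  have step1 : ∀ (t : Fin (K i)) (r : Option (Fin (K i))),
      utilB vB f g (fun _ _ _ => 0) pB i t (some t)
        - utilB vB f g (fun _ _ _ => 0) pB i t r = W t - Option.elim r 0 W := by
    intro t r
    cases r with
    | none => rw [utilB_zero_none, hsome]; rfl
    | some u => rw [hsome, hsome]; rfl
  calc ∑ t, ∑ r : Option (Fin (K i)), lamB i t r *
        (utilB vB f g (fun _ _ _ => 0) pB i t (some t)
          - utilB vB f g (fun _ _ _ => 0) pB i t r)
      = ∑ t, ∑ r : Option (Fin (K i)), lamB i t r * (W t - Option.elim r 0 W) :=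
        Finset.sum_congr rfl fun t _ => Finset.sum_congr rfl fun r _ => by rw [step1]
    _ = ∑ u, ((∑ r : Option (Fin (K i)), lamB i u r) - ∑ t, lamB i t (some u)) * W u :=
        block_general _ _
    _ = ∑ u, ∑ b : ProfileB K, dB lamB i u * ((if b i = u then 1 else 0) * -Q b) := by
        refine Finset.sum_congr rfl fun u _ => ?_
        rw [show ((∑ r : Option (Fin (K i)), lamB i u r) - ∑ t, lamB i t (some u))
            = dB lamB i u from rfl, hW]
        exact Finset.mul_sum _ _ _
    _ = ∑ b : ProfileB K, ∑ u, dB lamB i u * ((if b i = u then 1 else 0) * -Q b) :=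
        Finset.sum_comm
    _ = ∑ b : ProfileB K, dB lamB i (b i) * -Q b := by
        refine Finset.sum_congr rfl fun b _ => ?_
        rw [Finset.sum_congr rfl (fun u _ =>
          show dB lamB i u * ((if b i = u then 1 else 0) * -Q b)
            = if b i = u then dB lamB i u * -Q b else 0 from by split_ifs <;> ring)]
        rw [Finset.sum_ite_eq univ (b i) (fun u => dB lamB i u * -Q b),
          if_pos (Finset.mem_univ _)]
    _ = -∑ b : ProfileB K, dB lamB i (b i) * Q b := by
        rw [← sum_neg']
        exact Finset.sum_congr rfl fun b _ => by ring

lemma seller_block (hg1 : ∀ j, ∑ t, g j t = 1)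
    (vS : ∀ j, Fin (K' j) → ℝ) (pS : Fin m → ProfileB K → ProfileS K' → ℝ)
    (lamS : ∀ j, Fin (K' j) → Option (Fin (K' j)) → ℝ) (j : Fin m) :
    ∑ t, ∑ r : Option (Fin (K' j)), lamS j t r *
        (utilS vS f g (fun _ _ _ => 0) pS j t (some t)
          - utilS vS f g (fun _ _ _ => 0) pS j t r)
      = ∑ s : ProfileS K', dS lamS j (s j) *
          ((∏ j' ∈ univ.erase j, g j' (s j')) *
            ∑ b : ProfileB K, (∏ i, f i (b i)) * pS j b s) := by
  set Q : ProfileS K' → ℝ := fun s =>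
    (∏ j' ∈ univ.erase j, g j' (s j')) *
      ∑ b : ProfileB K, (∏ i, f i (b i)) * pS j b s with hQ
  set W : Fin (K' j) → ℝ := fun u =>
    ∑ s : ProfileS K', (if s j = u then 1 else 0) * Q s with hW
  have hsome : ∀ (t u : Fin (K' j)),
      utilS vS f g (fun _ _ _ => 0) pS j t (some u) = W u := by
    intro t u
    rw [utilS_zero_some hg1 vS pS j t u, hW]
  have step1 : ∀ (t : Fin (K' j)) (r : Option (Fin (K' j))),
      utilS vS f g (fun _ _ _ => 0) pS j t (some t)
        - utilS vS f g (fun _ _ _ => 0) pS j t r = W t - Option.elim r 0 W := by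
    intro t r
    cases r with
    | none => rw [utilS_zero_none, hsome]; rfl
    | some u => rw [hsome, hsome]; rfl
  calc ∑ t, ∑ r : Option (Fin (K' j)), lamS j t r *
        (utilS vS f g (fun _ _ _ => 0) pS j t (some t)
          - utilS vS f g (fun _ _ _ => 0) pS j t r)
      = ∑ t, ∑ r : Option (Fin (K' j)), lamS j t r * (W t - Option.elim r 0 W) :=
        Finset.sum_congr rfl fun t _ => Finset.sum_congr rfl fun r _ => by rw [step1]
    _ = ∑ u, ((∑ r : Option (Fin (K' j)), lamS j u r) - ∑ t, lamS j t (some u)) * W u :=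
        block_general _ _
    _ = ∑ u, ∑ s : ProfileS K', dS lamS j u * ((if s j = u then 1 else 0) * Q s) := by
        refine Finset.sum_congr rfl fun u _ => ?_
        rw [show ((∑ r : Option (Fin (K' j)), lamS j u r) - ∑ t, lamS j t (some u))
            = dS lamS j u from rfl, hW]
        exact Finset.mul_sum _ _ _
    _ = ∑ s : ProfileS K', ∑ u, dS lamS j u * ((if s j = u then 1 else 0) * Q s) :=
        Finset.sum_comm
    _ = ∑ s : ProfileS K', dS lamS j (s j) * Q s := by
        refine Finset.sum_congr rfl fun s _ => ?_
        rw [Finset.sum_congr rfl (fun u _ =>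
          show dS lamS j u * ((if s j = u then 1 else 0) * Q s)
            = if s j = u then dS lamS j u * Q s else 0 from by split_ifs <;> ring)]
        rw [Finset.sum_ite_eq univ (s j) (fun u => dS lamS j u * Q s),
          if_pos (Finset.mem_univ _)]

lemma Lagr_zero_x (hf1 : ∀ i, ∑ t, f i t = 1) (hg1 : ∀ j, ∑ t, g j t = 1)
    (vB : ∀ i, Fin (K i) → ℝ) (vS : ∀ j, Fin (K' j) → ℝ)
    (lamB : ∀ i, Fin (K i) → Option (Fin (K i)) → ℝ)
    (lamS : ∀ j, Fin (K' j) → Option (Fin (K' j)) → ℝ)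
    (pB : Fin n → ProfileB K → ProfileS K' → ℝ)
    (pS : Fin m → ProfileB K → ProfileS K' → ℝ) :
    Lagr vB vS f g lamB lamS (fun _ _ _ => 0) pB pS
      = (∑ j, ∑ s : ProfileS K', dS lamS j (s j) *
          ((∏ j' ∈ univ.erase j, g j' (s j')) *
            ∑ b : ProfileB K, (∏ i, f i (b i)) * pS j b s))
        - ∑ i, ∑ b : ProfileB K, dB lamB i (b i) *
          ((∏ i' ∈ univ.erase i, f i' (b i')) *
            ∑ s : ProfileS K', (∏ j, g j (s j)) * pB i b s) := by
  unfold Lagr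
  have e0 : Ex f g (fun b s => ∑ i, ∑ j,
      (fun (_ : ProfileB K) (_ : ProfileS K') (_ : Fin n × Fin m) => (0:ℝ)) b s (i, j)
        * (vB i (b i) - vS j (s j))) = 0 := by
    simp [Ex]
  rw [e0]
  rw [Finset.sum_congr rfl fun i (_ : i ∈ univ) => buyer_block hf1 vB pB lamB i]
  rw [Finset.sum_congr rfl fun j (_ : j ∈ univ) => seller_block hg1 vS pS lamS j]
  rw [sum_neg']
  ring

end Main3


section Main4
variable {n m : ℕ} {K : Fin n → ℕ} {K' : Fin m → ℕ}
variable {f : ∀ i, Fin (K i) → ℝ} {g : ∀ j, Fin (K' j) → ℝ}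

lemma utilB_decomp (vB : ∀ i, Fin (K i) → ℝ)
    (x : ProfileB K → ProfileS K' → Fin n × Fin m → ℝ)
    (pB : Fin n → ProfileB K → ProfileS K' → ℝ)
    (i : Fin n) (t : Fin (K i)) (r : Option (Fin (K i))) :
    utilB vB f g x pB i t r
      = utilB vB f g x (fun _ _ _ => 0) i t r
        + utilB vB f g (fun _ _ _ => 0) pB i t r := by
  unfold utilB
  rw [← Ex_add]
  refine Ex_congr fun b s => ?_
  cases r with
  | none => simp
  | some r' => simp only [Option.elim]; simp; ring

lemma utilS_decomp (vS : ∀ j, Fin (K' j) → ℝ)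
    (x : ProfileB K → ProfileS K' → Fin n × Fin m → ℝ)
    (pS : Fin m → ProfileB K → ProfileS K' → ℝ)
    (j : Fin m) (t : Fin (K' j)) (r : Option (Fin (K' j))) :
    utilS vS f g x pS j t r
      = utilS vS f g x (fun _ _ _ => 0) j t r
        + utilS vS f g (fun _ _ _ => 0) pS j t r := by
  unfold utilS
  rw [← Ex_add]
  refine Ex_congr fun b s => ?_
  cases r with
  | none => simp
  | some r' => simp only [Option.elim]; simp; ring

lemma Lagr_decomp (vB : ∀ i, Fin (K i) → ℝ) (vS : ∀ j, Fin (K' j) → ℝ)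
    (lamB : ∀ i, Fin (K i) → Option (Fin (K i)) → ℝ)
    (lamS : ∀ j, Fin (K' j) → Option (Fin (K' j)) → ℝ)
    (x : ProfileB K → ProfileS K' → Fin n × Fin m → ℝ)
    (pB : Fin n → ProfileB K → ProfileS K' → ℝ)
    (pS : Fin m → ProfileB K → ProfileS K' → ℝ) :
    Lagr vB vS f g lamB lamS x pB pS
      = Lagr vB vS f g lamB lamS x (fun _ _ _ => 0) (fun _ _ _ => 0)
        + Lagr vB vS f g lamB lamS (fun _ _ _ => 0) pB pS := by
  unfold Lagr
  have e0 : Ex f g (fun b s => ∑ i, ∑ j,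
      (fun (_ : ProfileB K) (_ : ProfileS K') (_ : Fin n × Fin m) => (0:ℝ)) b s (i, j)
        * (vB i (b i) - vS j (s j))) = 0 := by
    simp [Ex]
  rw [e0]
  have hB : ∀ i : Fin n,
      ∑ t, ∑ r : Option (Fin (K i)), lamB i t r *
        (utilB vB f g x pB i t (some t) - utilB vB f g x pB i t r)
      = (∑ t, ∑ r : Option (Fin (K i)), lamB i t r *
          (utilB vB f g x (fun _ _ _ => 0) i t (some t)
            - utilB vB f g x (fun _ _ _ => 0) i t r))
        + ∑ t, ∑ r : Option (Fin (K i)), lamB i t r *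
          (utilB vB f g (fun _ _ _ => 0) pB i t (some t)
            - utilB vB f g (fun _ _ _ => 0) pB i t r) := by
    intro i
    rw [← Finset.sum_add_distrib]
    refine Finset.sum_congr rfl fun t _ => ?_
    rw [← Finset.sum_add_distrib]
    refine Finset.sum_congr rfl fun r _ => ?_
    rw [utilB_decomp vB x pB i t (some t), utilB_decomp vB x pB i t r]
    ring
  have hS : ∀ j : Fin m,
      ∑ t, ∑ r : Option (Fin (K' j)), lamS j t r *
        (utilS vS f g x pS j t (some t) - utilS vS f g x pS j t r)
      = (∑ t, ∑ r : Option (Fin (K' j)), lamS j t r *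
          (utilS vS f g x (fun _ _ _ => 0) j t (some t)
            - utilS vS f g x (fun _ _ _ => 0) j t r))
        + ∑ t, ∑ r : Option (Fin (K' j)), lamS j t r *
          (utilS vS f g (fun _ _ _ => 0) pS j t (some t)
            - utilS vS f g (fun _ _ _ => 0) pS j t r) := by
    intro j
    rw [← Finset.sum_add_distrib]
    refine Finset.sum_congr rfl fun t _ => ?_
    rw [← Finset.sum_add_distrib]
    refine Finset.sum_congr rfl fun r _ => ?_
    rw [utilS_decomp vS x pS j t (some t), utilS_decomp vS x pS j t r]
    ring
  rw [Finset.sum_congr rfl fun i (_ : i ∈ univ) => hB i,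
    Finset.sum_congr rfl fun j (_ : j ∈ univ) => hS j,
    Finset.sum_add_distrib, Finset.sum_add_distrib]
  ring

lemma Lagr_zero_smul (hf1 : ∀ i, ∑ t, f i t = 1) (hg1 : ∀ j, ∑ t, g j t = 1)
    (vB : ∀ i, Fin (K i) → ℝ) (vS : ∀ j, Fin (K' j) → ℝ)
    (lamB : ∀ i, Fin (K i) → Option (Fin (K i)) → ℝ)
    (lamS : ∀ j, Fin (K' j) → Option (Fin (K' j)) → ℝ)
    (pB : Fin n → ProfileB K → ProfileS K' → ℝ)
    (pS : Fin m → ProfileB K → ProfileS K' → ℝ) (c : ℝ) :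
    Lagr vB vS f g lamB lamS (fun _ _ _ => 0)
        (fun i b s => c * pB i b s) (fun j b s => c * pS j b s)
      = c * Lagr vB vS f g lamB lamS (fun _ _ _ => 0) pB pS := by
  rw [Lagr_zero_x hf1 hg1, Lagr_zero_x hf1 hg1, mul_sub]
  have hpull : ∀ {A : Type} [inst : Fintype A] (w q : A → ℝ),
      ∑ a, w a * (c * q a) = c * ∑ a, w a * q a := by
    intro A inst w q
    rw [Finset.mul_sum]
    exact Finset.sum_congr rfl fun a _ => by ring
  congr 1
  · rw [Finset.mul_sum]
    refine Finset.sum_congr rfl fun j _ => ?_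
    rw [Finset.mul_sum]
    refine Finset.sum_congr rfl fun s _ => ?_
    rw [hpull (fun b => ∏ i, f i (b i)) (fun b => pS j b s)]
    ring
  · rw [Finset.mul_sum]
    refine Finset.sum_congr rfl fun i _ => ?_
    rw [Finset.mul_sum]
    refine Finset.sum_congr rfl fun b _ => ?_
    rw [hpull (fun s => ∏ j, g j (s j)) (fun s => pB i b s)]
    ring

end Main4


section Main5
variable {n m : ℕ} {K : Fin n → ℕ} {K' : Fin m → ℕ}
variable {f : ∀ i, Fin (K i) → ℝ} {g : ∀ j, Fin (K' j) → ℝ}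

lemma impl_bounds {F : Set (Finset (Fin n × Fin m))}
    {x : ProfileB K → ProfileS K' → Fin n × Fin m → ℝ}
    (hx : Implementable F x) (b : ProfileB K) (s : ProfileS K') (e : Fin n × Fin m) :
    0 ≤ x b s e ∧ x b s e ≤ 1 := by
  obtain ⟨γ, hγ0, _, hγ1, hxe⟩ := hx b s
  constructor
  · rw [hxe e]
    refine Finset.sum_nonneg fun M _ => mul_nonneg (hγ0 M) ?_
    split_ifs <;> norm_num
  · rw [hxe e]
    calc ∑ M, γ M * (if e ∈ M then (1:ℝ) else 0)
        ≤ ∑ M, γ M := by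
          refine Finset.sum_le_sum fun M _ => ?_
          calc γ M * (if e ∈ M then (1:ℝ) else 0) ≤ γ M * 1 :=
                mul_le_mul_of_nonneg_left (by split_ifs <;> norm_num) (hγ0 M)
            _ = γ M := mul_one _
      _ = 1 := hγ1
    
lemma zero_implementable {F : Set (Finset (Fin n × Fin m))} (hFne : F.Nonempty)
    (hdc : ∀ M ∈ F, ∀ M' ⊆ M, M' ∈ F) :
    Implementable (K := K) (K' := K') F (fun _ _ _ => 0) := by
  intro b s
  refine ⟨fun M => if M = ∅ then 1 else 0, ?_, ?_, ?_, ?_⟩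
  · intro M; by_cases h : M = ∅ <;> simp [h]
  · intro M hM
    have : M = ∅ := by by_contra h; simp [h] at hM
    obtain ⟨M₀, hM₀⟩ := hFne
    exact this ▸ hdc M₀ hM₀ ∅ (Finset.empty_subset _)
  · simp
  · intro e
    exact (Finset.sum_eq_zero fun M _ => by by_cases h : M = ∅ <;> simp [h]).symm

lemma utilB_x_abs_le (hf : ∀ i t, 0 < f i t) (hf1 : ∀ i, ∑ t, f i t = 1)
    (hg : ∀ j t, 0 < g j t) (hg1 : ∀ j, ∑ t, g j t = 1)
    (vB : ∀ i, Fin (K i) → ℝ)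
    {x : ProfileB K → ProfileS K' → Fin n × Fin m → ℝ}
    (hx : ∀ b s e, 0 ≤ x b s e ∧ x b s e ≤ 1)
    (i : Fin n) (t : Fin (K i)) (r : Option (Fin (K i))) :
    |utilB vB f g x (fun _ _ _ => 0) i t r| ≤ |vB i t| * m := by
  unfold utilB
  refine Ex_abs_le hf hf1 hg hg1 fun b s => ?_
  cases r with
  | none =>
    simp only [Option.elim, abs_zero]
    positivity
  | some r' =>
    simp only [Option.elim, sub_zero]
    rw [abs_mul]
    refine mul_le_mul_of_nonneg_left ?_ (abs_nonneg _)
    have h0 : 0 ≤ ∑ j, x (Function.update b i r') s (i, j) :=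
      Finset.sum_nonneg fun j _ => (hx _ _ _).1
    rw [abs_of_nonneg h0]
    calc ∑ j, x (Function.update b i r') s (i, j) ≤ ∑ _j : Fin m, (1:ℝ) :=
          Finset.sum_le_sum fun j _ => (hx _ _ _).2
      _ = m := by simp

lemma utilS_x_abs_le (hf : ∀ i t, 0 < f i t) (hf1 : ∀ i, ∑ t, f i t = 1)
    (hg : ∀ j t, 0 < g j t) (hg1 : ∀ j, ∑ t, g j t = 1)
    (vS : ∀ j, Fin (K' j) → ℝ)
    {x : ProfileB K → ProfileS K' → Fin n × Fin m → ℝ}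
    (hx : ∀ b s e, 0 ≤ x b s e ∧ x b s e ≤ 1)
    (j : Fin m) (t : Fin (K' j)) (r : Option (Fin (K' j))) :
    |utilS vS f g x (fun _ _ _ => 0) j t r| ≤ |vS j t| * n := by
  unfold utilS
  refine Ex_abs_le hf hf1 hg hg1 fun b s => ?_
  cases r with
  | none =>
    simp only [Option.elim, abs_zero]
    positivity
  | some r' =>
    simp only [Option.elim, zero_sub, abs_neg]
    rw [abs_mul]
    refine mul_le_mul_of_nonneg_left ?_ (abs_nonneg _)
    have h0 : 0 ≤ ∑ i, x b (Function.update s j r') (i, j) :=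
      Finset.sum_nonneg fun i _ => (hx _ _ _).1
    rw [abs_of_nonneg h0]
    calc ∑ i, x b (Function.update s j r') (i, j) ≤ ∑ _i : Fin n, (1:ℝ) :=
          Finset.sum_le_sum fun i _ => (hx _ _ _).2
      _ = n := by simp

lemma Lagr_x_le (hf : ∀ i t, 0 < f i t) (hf1 : ∀ i, ∑ t, f i t = 1)
    (hg : ∀ j t, 0 < g j t) (hg1 : ∀ j, ∑ t, g j t = 1)
    (vB : ∀ i, Fin (K i) → ℝ) (vS : ∀ j, Fin (K' j) → ℝ)
    (lamB : ∀ i, Fin (K i) → Option (Fin (K i)) → ℝ)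
    (lamS : ∀ j, Fin (K' j) → Option (Fin (K' j)) → ℝ)
    (hlamB : ∀ i t r, 0 ≤ lamB i t r) (hlamS : ∀ j t r, 0 ≤ lamS j t r)
    {x : ProfileB K → ProfileS K' → Fin n × Fin m → ℝ}
    (hx : ∀ b s e, 0 ≤ x b s e ∧ x b s e ≤ 1) :
    Lagr vB vS f g lamB lamS x (fun _ _ _ => 0) (fun _ _ _ => 0)
      ≤ (∑ i, ∑ j : Fin m, ((∑ t, |vB i t|) + ∑ t, |vS j t|))
        + (∑ i, ∑ t, ∑ r : Option (Fin (K i)), lamB i t r * (2 * |vB i t| * m))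
        + ∑ j, ∑ t, ∑ r : Option (Fin (K' j)), lamS j t r * (2 * |vS j t| * n) := by
  unfold Lagr
  refine add_le_add (add_le_add ?_ ?_) ?_
  · refine Ex_le hf hf1 hg hg1 fun b s => ?_
    refine Finset.sum_le_sum fun i _ => Finset.sum_le_sum fun j _ => ?_
    have h1 : x b s (i, j) * (vB i (b i) - vS j (s j)) ≤ |vB i (b i) - vS j (s j)| := by
      calc x b s (i, j) * (vB i (b i) - vS j (s j))
          ≤ x b s (i, j) * |vB i (b i) - vS j (s j)| :=
            mul_le_mul_of_nonneg_left (le_abs_self _) (hx b s (i, j)).1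
        _ ≤ 1 * |vB i (b i) - vS j (s j)| :=
            mul_le_mul_of_nonneg_right (hx b s (i, j)).2 (abs_nonneg _)
        _ = |vB i (b i) - vS j (s j)| := one_mul _
    refine h1.trans ((abs_sub _ _).trans (add_le_add ?_ ?_))
    · exact Finset.single_le_sum (fun t _ => abs_nonneg (vB i t)) (Finset.mem_univ (b i))
    · exact Finset.single_le_sum (fun t _ => abs_nonneg (vS j t)) (Finset.mem_univ (s j))
  · refine Finset.sum_le_sum fun i _ => Finset.sum_le_sum fun t _ =>
      Finset.sum_le_sum fun r _ => ?_
    refine mul_le_mul_of_nonneg_left ?_ (hlamB i t r)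
    calc utilB vB f g x (fun _ _ _ => 0) i t (some t) - utilB vB f g x (fun _ _ _ => 0) i t r
        ≤ |utilB vB f g x (fun _ _ _ => 0) i t (some t)|
          + |utilB vB f g x (fun _ _ _ => 0) i t r| :=
          (le_abs_self _).trans ((abs_sub _ _))
      _ ≤ |vB i t| * m + |vB i t| * m :=
          add_le_add (utilB_x_abs_le hf hf1 hg hg1 vB hx i t (some t))
            (utilB_x_abs_le hf hf1 hg hg1 vB hx i t r)
      _ = 2 * |vB i t| * m := by ring
  · refine Finset.sum_le_sum fun j _ => Finset.sum_le_sum fun t _ =>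
      Finset.sum_le_sum fun r _ => ?_
    refine mul_le_mul_of_nonneg_left ?_ (hlamS j t r)
    calc utilS vS f g x (fun _ _ _ => 0) j t (some t) - utilS vS f g x (fun _ _ _ => 0) j t r
        ≤ |utilS vS f g x (fun _ _ _ => 0) j t (some t)|
          + |utilS vS f g x (fun _ _ _ => 0) j t r| :=
          (le_abs_self _).trans ((abs_sub _ _))
      _ ≤ |vS j t| * n + |vS j t| * n :=
          add_le_add (utilS_x_abs_le hf hf1 hg hg1 vS hx j t (some t))
            (utilS_x_abs_le hf hf1 hg hg1 vS hx j t r)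
      _ = 2 * |vS j t| * n := by ring

end Main5


section Main6
variable {n m : ℕ} {K : Fin n → ℕ} {K' : Fin m → ℕ}
variable {f : ∀ i, Fin (K i) → ℝ} {g : ∀ j, Fin (K' j) → ℝ}

lemma Plin_eq_zero {α : ℝ}
    (hf1 : ∀ i, ∑ t, f i t = 1) (hg1 : ∀ j, ∑ t, g j t = 1)
    (vB : ∀ i, Fin (K i) → ℝ) (vS : ∀ j, Fin (K' j) → ℝ)
    (lamB : ∀ i, Fin (K i) → Option (Fin (K i)) → ℝ)
    (lamS : ∀ j, Fin (K' j) → Option (Fin (K' j)) → ℝ)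
    (pB : Fin n → ProfileB K → ProfileS K' → ℝ)
    (pS : Fin m → ProfileB K → ProfileS K' → ℝ)
    (hB : ∀ i u, dB lamB i u = α * f i u)
    (hS : ∀ j u, dS lamS j u = α * g j u)
    (hbal : ∀ b s, ∑ i, pB i b s = ∑ j, pS j b s) :
    Lagr vB vS f g lamB lamS (fun _ _ _ => 0) pB pS = 0 := by
  rw [Lagr_zero_x hf1 hg1]
  have hpull3 : ∀ {A : Type} [inst : Fintype A] (c w : ℝ) (q : A → ℝ),
      ∑ a, c * (w * q a) = c * (w * ∑ a, q a) := by
    intro A inst c w q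
    rw [Finset.mul_sum, Finset.mul_sum]
  have hSeq : ∀ (j : Fin m) (s : ProfileS K'),
      dS lamS j (s j) * ((∏ j' ∈ univ.erase j, g j' (s j')) *
        ∑ b : ProfileB K, (∏ i, f i (b i)) * pS j b s)
      = ∑ b : ProfileB K, α * (((∏ i, f i (b i)) * ∏ j', g j' (s j')) * pS j b s) := by
    intro j s
    have hEg := Finset.mul_prod_erase univ (fun j' => g j' (s j')) (Finset.mem_univ j)
    calc dS lamS j (s j) * ((∏ j' ∈ univ.erase j, g j' (s j')) *
          ∑ b : ProfileB K, (∏ i, f i (b i)) * pS j b s)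
        = α * ((g j (s j) * ∏ j' ∈ univ.erase j, g j' (s j')) *
            ∑ b : ProfileB K, (∏ i, f i (b i)) * pS j b s) := by rw [hS j (s j)]; ring
      _ = α * ((∏ j', g j' (s j')) * ∑ b : ProfileB K, (∏ i, f i (b i)) * pS j b s) := by
          rw [hEg]
      _ = ∑ b : ProfileB K, α * (((∏ i, f i (b i)) * ∏ j', g j' (s j')) * pS j b s) := by
          rw [Finset.mul_sum, Finset.mul_sum]
          exact Finset.sum_congr rfl fun b _ => by ring
  have hBeq : ∀ (i : Fin n) (b : ProfileB K),
      dB lamB i (b i) * ((∏ i' ∈ univ.erase i, f i' (b i')) *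
        ∑ s : ProfileS K', (∏ j, g j (s j)) * pB i b s)
      = ∑ s : ProfileS K', α * (((∏ i', f i' (b i')) * ∏ j, g j (s j)) * pB i b s) := by
    intro i b
    have hEf := Finset.mul_prod_erase univ (fun i' => f i' (b i')) (Finset.mem_univ i)
    calc dB lamB i (b i) * ((∏ i' ∈ univ.erase i, f i' (b i')) *
          ∑ s : ProfileS K', (∏ j, g j (s j)) * pB i b s)
        = α * ((f i (b i) * ∏ i' ∈ univ.erase i, f i' (b i')) *
            ∑ s : ProfileS K', (∏ j, g j (s j)) * pB i b s) := by rw [hB i (b i)]; ring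
      _ = α * ((∏ i', f i' (b i')) * ∑ s : ProfileS K', (∏ j, g j (s j)) * pB i b s) := by
          rw [hEf]
      _ = ∑ s : ProfileS K', α * (((∏ i', f i' (b i')) * ∏ j, g j (s j)) * pB i b s) := by
          rw [Finset.mul_sum, Finset.mul_sum]
          exact Finset.sum_congr rfl fun s _ => by ring
  have hStot : ∑ j, ∑ s : ProfileS K', dS lamS j (s j) *
        ((∏ j' ∈ univ.erase j, g j' (s j')) *
          ∑ b : ProfileB K, (∏ i, f i (b i)) * pS j b s)
      = ∑ b : ProfileB K, ∑ s : ProfileS K',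
          α * (((∏ i, f i (b i)) * ∏ j, g j (s j)) * ∑ j, pS j b s) := by
    calc ∑ j, ∑ s : ProfileS K', dS lamS j (s j) *
          ((∏ j' ∈ univ.erase j, g j' (s j')) *
            ∑ b : ProfileB K, (∏ i, f i (b i)) * pS j b s)
        = ∑ j, ∑ s : ProfileS K', ∑ b : ProfileB K,
            α * (((∏ i, f i (b i)) * ∏ j', g j' (s j')) * pS j b s) :=
          Finset.sum_congr rfl fun j _ => Finset.sum_congr rfl fun s _ => hSeq j s
      _ = ∑ s : ProfileS K', ∑ j, ∑ b : ProfileB K,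
            α * (((∏ i, f i (b i)) * ∏ j', g j' (s j')) * pS j b s) := Finset.sum_comm
      _ = ∑ s : ProfileS K', ∑ b : ProfileB K, ∑ j,
            α * (((∏ i, f i (b i)) * ∏ j', g j' (s j')) * pS j b s) :=
          Finset.sum_congr rfl fun s _ => Finset.sum_comm
      _ = ∑ b : ProfileB K, ∑ s : ProfileS K', ∑ j,
            α * (((∏ i, f i (b i)) * ∏ j', g j' (s j')) * pS j b s) := Finset.sum_comm
      _ = ∑ b : ProfileB K, ∑ s : ProfileS K',
            α * (((∏ i, f i (b i)) * ∏ j, g j (s j)) * ∑ j, pS j b s) :=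
          Finset.sum_congr rfl fun b _ => Finset.sum_congr rfl fun s _ =>
            hpull3 α _ (fun j => pS j b s)
  have hBtot : ∑ i, ∑ b : ProfileB K, dB lamB i (b i) *
        ((∏ i' ∈ univ.erase i, f i' (b i')) *
          ∑ s : ProfileS K', (∏ j, g j (s j)) * pB i b s)
      = ∑ b : ProfileB K, ∑ s : ProfileS K',
          α * (((∏ i, f i (b i)) * ∏ j, g j (s j)) * ∑ i, pB i b s) := by
    calc ∑ i, ∑ b : ProfileB K, dB lamB i (b i) *
          ((∏ i' ∈ univ.erase i, f i' (b i')) *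
            ∑ s : ProfileS K', (∏ j, g j (s j)) * pB i b s)
        = ∑ i, ∑ b : ProfileB K, ∑ s : ProfileS K',
            α * (((∏ i', f i' (b i')) * ∏ j, g j (s j)) * pB i b s) :=
          Finset.sum_congr rfl fun i _ => Finset.sum_congr rfl fun b _ => hBeq i b
      _ = ∑ b : ProfileB K, ∑ i, ∑ s : ProfileS K',
            α * (((∏ i', f i' (b i')) * ∏ j, g j (s j)) * pB i b s) := Finset.sum_comm
      _ = ∑ b : ProfileB K, ∑ s : ProfileS K', ∑ i,
            α * (((∏ i', f i' (b i')) * ∏ j, g j (s j)) * pB i b s) :=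
          Finset.sum_congr rfl fun b _ => Finset.sum_comm
      _ = ∑ b : ProfileB K, ∑ s : ProfileS K',
            α * (((∏ i, f i (b i)) * ∏ j, g j (s j)) * ∑ i, pB i b s) :=
          Finset.sum_congr rfl fun b _ => Finset.sum_congr rfl fun s _ =>
            hpull3 α _ (fun i => pB i b s)
  rw [hStot, hBtot, sub_eq_zero]
  exact Finset.sum_congr rfl fun b _ => Finset.sum_congr rfl fun s _ => by rw [hbal b s]

end Main6

end MyAux

/-- the sup of the partial Lagrangian over implementable allocations and
balanced payments is finite iff the dual variables form a flow: there is `α ≥ 0` with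
`(1/f_i(b_i))·(Σ_{b'} λ^B_i(b_i,b') − Σ_{b'} λ^B_i(b',b_i)) = α` for every buyer `i` and
type `b_i`, and symmetrically for every seller. -/
theorem stmt_4
    (n m : ℕ) (hn : 0 < n) (hm : 0 < m)
    (K : Fin n → ℕ) (hK : ∀ i, 0 < K i)
    (K' : Fin m → ℕ) (hK' : ∀ j, 0 < K' j)
    (vB : ∀ i, Fin (K i) → ℝ) (hvB : ∀ i, StrictMono (vB i))
    (vS : ∀ j, Fin (K' j) → ℝ) (hvS : ∀ j, StrictMono (vS j))
    (f : ∀ i, Fin (K i) → ℝ) (hf : ∀ i t, 0 < f i t) (hf1 : ∀ i, ∑ t, f i t = 1)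
    (g : ∀ j, Fin (K' j) → ℝ) (hg : ∀ j t, 0 < g j t) (hg1 : ∀ j, ∑ t, g j t = 1)
    (F : Set (Finset (Fin n × Fin m))) (hFne : F.Nonempty)
    (hdc : ∀ M ∈ F, ∀ M' ⊆ M, M' ∈ F)
    (hmatch : ∀ M ∈ F, ∀ e ∈ M, ∀ e' ∈ M, e ≠ e' → e.1 ≠ e'.1 ∧ e.2 ≠ e'.2)
    (lamB : ∀ i, Fin (K i) → Option (Fin (K i)) → ℝ)
    (lamS : ∀ j, Fin (K' j) → Option (Fin (K' j)) → ℝ)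
    (hlamB : ∀ i t r, 0 ≤ lamB i t r) (hlamS : ∀ j t r, 0 ≤ lamS j t r) :
    (∃ C : ℝ,
      ∀ (x : ProfileB K → ProfileS K' → Fin n × Fin m → ℝ)
        (pB : Fin n → ProfileB K → ProfileS K' → ℝ)
        (pS : Fin m → ProfileB K → ProfileS K' → ℝ),
        Implementable F x →
        (∀ b s, ∑ i, pB i b s = ∑ j, pS j b s) →
        Lagr vB vS f g lamB lamS x pB pS ≤ C)
    ↔ (∃ α : ℝ, 0 ≤ α ∧
        (∀ (i : Fin n) (t : Fin (K i)),
          (1 / f i t) * ((∑ r : Option (Fin (K i)), lamB i t r)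
            - ∑ t' : Fin (K i), lamB i t' (some t)) = α) ∧
        (∀ (j : Fin m) (t : Fin (K' j)),
          (1 / g j t) * ((∑ r : Option (Fin (K' j)), lamS j t r)
            - ∑ t' : Fin (K' j), lamS j t' (some t)) = α)) := by
  constructor
  · rintro ⟨C, hC⟩
    have hx0 : Implementable (K := K) (K' := K') F (fun _ _ _ => 0) :=
      zero_implementable hFne hdc
    have hzero : ∀ (pB : Fin n → ProfileB K → ProfileS K' → ℝ)
        (pS : Fin m → ProfileB K → ProfileS K' → ℝ),
        (∀ b s, ∑ i, pB i b s = ∑ j, pS j b s) →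
        Lagr vB vS f g lamB lamS (fun _ _ _ => 0) pB pS = 0 := by
      intro pB pS hbal
      by_contra hL
      have hcb : ∀ c : ℝ,
          Lagr vB vS f g lamB lamS (fun _ _ _ => 0) (fun _ _ _ => 0) (fun _ _ _ => 0)
            + c * Lagr vB vS f g lamB lamS (fun _ _ _ => 0) pB pS ≤ C := by
        intro c
        have hbal' : ∀ b s, ∑ i, c * pB i b s = ∑ j, c * pS j b s := by
          intro b s
          rw [← Finset.mul_sum, ← Finset.mul_sum, hbal b s]
        have h := hC (fun _ _ _ => 0) (fun i b s => c * pB i b s)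
          (fun j b s => c * pS j b s) hx0 hbal'
        rwa [Lagr_decomp, Lagr_zero_smul hf1 hg1] at h
      set L := Lagr vB vS f g lamB lamS (fun _ _ _ => 0) pB pS with hLdef
      set L0 := Lagr vB vS f g lamB lamS (fun _ _ _ => 0) (fun _ _ _ => 0) (fun _ _ _ => 0)
        with hL0def
      have hc := hcb ((C + 1 - L0) / L)
      rw [div_mul_cancel₀ _ hL] at hc
      linarith
    have key : ∀ (i0 : Fin n) (u : Fin (K i0)) (j0 : Fin m) (w : Fin (K' j0)),
        f i0 u * dS lamS j0 w = g j0 w * dB lamB i0 u := by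
      intro i0 u j0 w
      set b0 : ProfileB K := Function.update (fun i => ⟨0, hK i⟩) i0 u with hb0
      set s0 : ProfileS K' := Function.update (fun j => ⟨0, hK' j⟩) j0 w with hs0
      have hb0i : b0 i0 = u := by rw [hb0]; exact Function.update_self _ _ _
      have hs0j : s0 j0 = w := by rw [hs0]; exact Function.update_self _ _ _
      have hbal : ∀ (b : ProfileB K) (s : ProfileS K'),
          (∑ i, (if i = i0 then (1:ℝ) else 0) *
            ((if b = b0 then (1:ℝ) else 0) * (if s = s0 then (1:ℝ) else 0)))
          = ∑ j, (if j = j0 then (1:ℝ) else 0) *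
            ((if b = b0 then (1:ℝ) else 0) * (if s = s0 then (1:ℝ) else 0)) := by
        intro b s
        rw [← Finset.sum_mul, ← Finset.sum_mul]
        simp [Finset.sum_ite_eq']
      have h0 := hzero
        (fun i b s => (if i = i0 then (1:ℝ) else 0) *
          ((if b = b0 then (1:ℝ) else 0) * (if s = s0 then (1:ℝ) else 0)))
        (fun j b s => (if j = j0 then (1:ℝ) else 0) *
          ((if b = b0 then (1:ℝ) else 0) * (if s = s0 then (1:ℝ) else 0))) hbal
      rw [Lagr_zero_x hf1 hg1, sub_eq_zero] at h0
      have hScol : ∑ j, ∑ s : ProfileS K', dS lamS j (s j) *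
          ((∏ j' ∈ univ.erase j, g j' (s j')) * ∑ b : ProfileB K, (∏ i, f i (b i)) *
            ((if j = j0 then (1:ℝ) else 0) *
              ((if b = b0 then (1:ℝ) else 0) * (if s = s0 then (1:ℝ) else 0))))
          = dS lamS j0 (s0 j0) *
            ((∏ j' ∈ univ.erase j0, g j' (s0 j')) * ∏ i, f i (b0 i)) := by
        simp [mul_ite, ite_mul, Finset.sum_ite_eq', Finset.mul_sum]
      have hBcol : ∑ i, ∑ b : ProfileB K, dB lamB i (b i) *
          ((∏ i' ∈ univ.erase i, f i' (b i')) * ∑ s : ProfileS K', (∏ j, g j (s j)) *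
            ((if i = i0 then (1:ℝ) else 0) *
              ((if b = b0 then (1:ℝ) else 0) * (if s = s0 then (1:ℝ) else 0))))
          = dB lamB i0 (b0 i0) *
            ((∏ i' ∈ univ.erase i0, f i' (b0 i')) * ∏ j, g j (s0 j)) := by
        simp [mul_ite, ite_mul, Finset.sum_ite_eq', Finset.mul_sum]
      rw [hScol, hBcol, hb0i, hs0j] at h0
      have hPf : (∏ i, f i (b0 i)) = f i0 u * ∏ i' ∈ univ.erase i0, f i' (b0 i') := by
        rw [← Finset.mul_prod_erase univ _ (Finset.mem_univ i0), hb0i]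
      have hPg : (∏ j, g j (s0 j)) = g j0 w * ∏ j' ∈ univ.erase j0, g j' (s0 j') := by
        rw [← Finset.mul_prod_erase univ _ (Finset.mem_univ j0), hs0j]
      rw [hPf, hPg] at h0
      have hEfpos : 0 < ∏ i' ∈ univ.erase i0, f i' (b0 i') :=
        Finset.prod_pos fun i' _ => hf i' _
      have hEgpos : 0 < ∏ j' ∈ univ.erase j0, g j' (s0 j') :=
        Finset.prod_pos fun j' _ => hg j' _
      have h2 : ((∏ i' ∈ univ.erase i0, f i' (b0 i')) * ∏ j' ∈ univ.erase j0, g j' (s0 j'))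
            * (f i0 u * dS lamS j0 w)
          = ((∏ i' ∈ univ.erase i0, f i' (b0 i')) * ∏ j' ∈ univ.erase j0, g j' (s0 j'))
            * (g j0 w * dB lamB i0 u) := by linear_combination h0
      exact mul_left_cancel₀ (by positivity) h2
    set ist : Fin n := ⟨0, hn⟩ with hist
    set jst : Fin m := ⟨0, hm⟩ with hjst
    set ust : Fin (K ist) := ⟨0, hK ist⟩ with hust
    set wst : Fin (K' jst) := ⟨0, hK' jst⟩ with hwst
    set α : ℝ := (1 / g jst wst) * dS lamS jst wst with hαdef
    have hbuyer : ∀ (i : Fin n) (t : Fin (K i)), (1 / f i t) * dB lamB i t = α := by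
      intro i t
      have hk := key i t jst wst
      have hfne := (hf i t).ne'
      have hgne := (hg jst wst).ne'
      rw [hαdef]
      field_simp
      linarith [hk]
    have hdBα : ∀ (i : Fin n) (t : Fin (K i)), dB lamB i t = α * f i t := by
      intro i t
      have hb := hbuyer i t
      rw [one_div, inv_mul_eq_div, div_eq_iff (hf i t).ne'] at hb
      exact hb
    have hseller : ∀ (j : Fin m) (t : Fin (K' j)), (1 / g j t) * dS lamS j t = α := by
      intro j t
      have hk := key ist ust j t
      rw [hdBα ist ust] at hk
      have h4 : f ist ust * dS lamS j t = f ist ust * (α * g j t) := hk.trans (by ring)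
      have h5 : dS lamS j t = α * g j t := mul_left_cancel₀ (hf ist ust).ne' h4
      rw [h5]
      field_simp
      exact mul_div_cancel_left₀ α (hg j t).ne'
    have hnn : 0 ≤ α := by
      have hsum1 : ∑ u, dB lamB ist u = α := by
        rw [Finset.sum_congr rfl fun u (_ : u ∈ univ) => hdBα ist u, ← Finset.mul_sum,
          hf1, mul_one]
      have hsum2 : ∑ u, dB lamB ist u = ∑ u, lamB ist u none := by
        unfold dB
        rw [Finset.sum_sub_distrib,
          Finset.sum_congr rfl fun u (_ : u ∈ univ) => Fintype.sum_option (lamB ist u),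
          Finset.sum_add_distrib, Finset.sum_comm]
        ring
      have hnn' : 0 ≤ ∑ u, lamB ist u none :=
        Finset.sum_nonneg fun u _ => hlamB ist u none
      linarith
    exact ⟨α, hnn, fun i t => hbuyer i t, fun j t => hseller j t⟩
  · rintro ⟨α, hα0, hbuy, hsell⟩
    refine ⟨(∑ i, ∑ j : Fin m, ((∑ t, |vB i t|) + ∑ t, |vS j t|))
        + (∑ i, ∑ t, ∑ r : Option (Fin (K i)), lamB i t r * (2 * |vB i t| * m))
        + ∑ j, ∑ t, ∑ r : Option (Fin (K' j)), lamS j t r * (2 * |vS j t| * n), ?_⟩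
    intro x pB pS himp hbal
    have hB' : ∀ (i : Fin n) (u : Fin (K i)), dB lamB i u = α * f i u := by
      intro i u
      have hb := hbuy i u
      rw [one_div, inv_mul_eq_div, div_eq_iff (hf i u).ne'] at hb
      exact hb
    have hS' : ∀ (j : Fin m) (u : Fin (K' j)), dS lamS j u = α * g j u := by
      intro j u
      have hs := hsell j u
      rw [one_div, inv_mul_eq_div, div_eq_iff (hg j u).ne'] at hs
      exact hs
    rw [Lagr_decomp, Plin_eq_zero hf1 hg1 vB vS lamB lamS pB pS hB' hS' hbal, add_zero]
    exact Lagr_x_le hf hf1 hg hg1 vB vS lamB lamS hlamB hlamS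
      fun b s e => impl_bounds himp b s e


end Stmt4
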